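/- Pulling back through an isometry: let V: H₁ → H₂ be an isometry, A a binary observable on H₁, B a binary observable on H₂, and ψ ∈ Pos(H₁). Then Tr((A − V†BV)†(A − V†BV)ψ) ≤ Tr((VAV† − B)†(VAV† − B) VψV†). In particular, if VAV† is ε-close to B on VψV† in the state-dependent distance, then A is ε-close to V†BV on ψ. -/

import Mathlib

open Matrix
open scoped ComplexOrder

private lemma trace_ctm_self_nonneg' {n m : Type*} [Fintype n] [Fintype m]
    (X : Matrix m n ℂ) : 0 ≤ (Xᴴ * X).trace := by
  rw [Matrix.trace]
  refine Finset.sum_nonneg fun i _ => ?_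
  simp only [Matrix.diag_apply, Matrix.mul_apply, Matrix.conjTranspose_apply]
  exact Finset.sum_nonneg fun j _ => star_mul_self_nonneg _

open scoped MatrixOrder in
private lemma trace_psd_nonneg' {n m : Type*} [Fintype n] [DecidableEq n] [Fintype m]
    (M : Matrix m n ℂ) (ψ : Matrix n n ℂ) (hψ : ψ.PosSemidef) :
    0 ≤ (Mᴴ * M * ψ).trace := by
  have h : ψ = CFC.sqrt ψ * CFC.sqrt ψ := (CFC.sqrt_mul_sqrt_self ψ hψ.nonneg).symm
  have hs : (CFC.sqrt ψ)ᴴ = CFC.sqrt ψ := (CFC.sqrt_nonneg ψ).posSemidef.1.eq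
  calc (0:ℂ) ≤ ((M * CFC.sqrt ψ)ᴴ * (M * CFC.sqrt ψ)).trace := trace_ctm_self_nonneg' _
    _ = (Mᴴ * M * ψ).trace := by
        rw [conjTranspose_mul, hs, show CFC.sqrt ψ * Mᴴ * (M * CFC.sqrt ψ) =
          CFC.sqrt ψ * (Mᴴ * M * CFC.sqrt ψ) by simp only [Matrix.mul_assoc],
          Matrix.trace_mul_comm, Matrix.mul_assoc, ← h]

/-- Pulling back a state-dependent closeness statement through an isometry:
`Tr((A − V†BV)†(A − V†BV)ψ) ≤ Tr((VAV† − B)†(VAV† − B) VψV†)`. -/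
theorem pull_back_through_isometry {n m : Type*} [Fintype n] [DecidableEq n]
    [Fintype m] [DecidableEq m]
    (V : Matrix m n ℂ) (hV : Vᴴ * V = 1)
    (A : Matrix n n ℂ) (hAherm : Aᴴ = A) (hAsq : A * A = 1)
    (B : Matrix m m ℂ) (hBherm : Bᴴ = B) (hBsq : B * B = 1)
    (ψ : Matrix n n ℂ) (hψ : ψ.PosSemidef) :
    ((A - Vᴴ * B * V)ᴴ * (A - Vᴴ * B * V) * ψ).trace ≤
      ((V * A * Vᴴ - B)ᴴ * (V * A * Vᴴ - B) * (V * ψ * Vᴴ)).trace := by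
  set E := V * A * Vᴴ - B with hE
  set D := A - Vᴴ * B * V with hD
  set N := (1 - V * Vᴴ) * E * V with hN
  have hkey : Vᴴ * Eᴴ * E * V = Dᴴ * D + Nᴴ * N := by
    have hVr : ∀ X : Matrix n n ℂ, Vᴴ * (V * X) = X := fun X => by
      rw [← Matrix.mul_assoc, hV, Matrix.one_mul]
    simp only [hE, hD, hN, conjTranspose_sub, conjTranspose_mul, conjTranspose_conjTranspose,
      conjTranspose_one, Matrix.sub_mul, Matrix.mul_sub, Matrix.mul_one, Matrix.one_mul,
      Matrix.mul_assoc, hVr, hV]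
    noncomm_ring
  have hRHS : (Eᴴ * E * (V * ψ * Vᴴ)).trace = (Dᴴ * D * ψ).trace + (Nᴴ * N * ψ).trace := by
    rw [show Eᴴ * E * (V * ψ * Vᴴ) = Eᴴ * E * V * ψ * Vᴴ by simp only [Matrix.mul_assoc],
      Matrix.trace_mul_comm,
      show Vᴴ * (Eᴴ * E * V * ψ) = (Vᴴ * Eᴴ * E * V) * ψ by simp only [Matrix.mul_assoc],
      hkey, Matrix.add_mul, Matrix.trace_add]
  rw [hRHS]
  exact le_add_of_nonneg_right (trace_psd_nonneg' N ψ hψ)
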